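/- For nonzero ideals A, B in a Dedekind domain R, there is an R-module isomorphism A ⊕ B ≅ R ⊕ AB (Steinitz isomorphism theorem). -/

import Mathlib

open Ideal UniqueFactorizationMonoid FractionalIdeal nonZeroDivisors

section Aux
variable {R : Type*} [CommRing R] [IsDomain R]

/-- Scaling equivalence: `I ≃ span{a} * I` for `a ≠ 0`. -/
noncomputable def scaleEquiv (a : R) (ha : a ≠ 0) (I : Ideal R) :
    I ≃ₗ[R] (Ideal.span {a} * I : Ideal R) := by
  refine LinearEquiv.ofBijective
    { toFun := fun x => ⟨a * x, Ideal.mul_mem_mul (Ideal.mem_span_singleton_self a) x.2⟩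
      map_add' := fun x y => by ext; simp [mul_add]
      map_smul' := fun r x => by ext; simp [mul_comm, mul_assoc, mul_left_comm] } ⟨?_, ?_⟩
  · intro x y h
    have : a * (x : R) = a * (y : R) := congrArg Subtype.val h
    exact Subtype.ext (mul_left_cancel₀ ha this)
  · rintro ⟨z, hz⟩
    obtain ⟨w, hw, hwz⟩ := Ideal.mem_span_singleton_mul.mp hz
    exact ⟨⟨w, hw⟩, Subtype.ext hwz⟩

variable [IsDedekindDomain R]

/-- Avoidance: an element of `A` outside `A*P` for every maximal ideal `P` containing `B`. -/
lemma exists_avoid (A B : Ideal R) (hA : A ≠ ⊥) (hB : B ≠ ⊥) :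
    ∃ a : R, a ∈ A ∧ a ≠ 0 ∧ ∀ P : Ideal R, P.IsMaximal → B ≤ P → a ∉ A * P := by
  classical
  set s := (normalizedFactors B).toFinset with hs
  have hprime : ∀ P ∈ s, Prime P := fun P hP =>
    prime_of_normalized_factor P (Multiset.mem_toFinset.mp hP)
  have hmem_s : ∀ P : Ideal R, P.IsMaximal → B ≤ P → P ∈ s := by
    intro P hPm hle
    have hPb : P ≠ ⊥ := fun h => hB (le_bot_iff.mp (h ▸ hle))
    have hPp : Prime P := Ideal.prime_of_isPrime hPb hPm.isPrime
    rw [hs, Multiset.mem_toFinset, Ideal.mem_normalizedFactors_iff hB]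
    exact ⟨hPm.isPrime, hle⟩
  suffices h : ∃ a : R, a ∈ A ∧ a ≠ 0 ∧ ∀ P ∈ s, a ∉ A * P by
    obtain ⟨a, h1, h2, h3⟩ := h
    exact ⟨a, h1, h2, fun P hPm hle => h3 P (hmem_s P hPm hle)⟩
  rcases s.eq_empty_or_nonempty with he | hne
  · obtain ⟨a, ha, ha0⟩ := Submodule.exists_mem_ne_zero_of_ne_bot hA
    exact ⟨a, ha, ha0, by simp [he]⟩
  have hXne : ∀ P ∈ s, (∏ Q ∈ s.erase P, Q) ≠ 0 := by
    intro P hP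
    exact Finset.prod_ne_zero_iff.mpr fun Q hQ => (hprime Q (Finset.mem_of_mem_erase hQ)).ne_zero
  have hmulerase : ∀ P ∈ s, P * ∏ Q ∈ s.erase P, Q = ∏ Q ∈ s, Q := fun P hP =>
    Finset.mul_prod_erase s (fun Q => Q) hP
  have hstrict : ∀ P ∈ s,
      ∃ x, x ∈ A * ∏ Q ∈ s.erase P, Q ∧ x ∉ A * ∏ Q ∈ s, Q := by
    intro P hP
    have hlt : A * ∏ Q ∈ s, Q < A * ∏ Q ∈ s.erase P, Q := by
      rw [← hmulerase P hP]
      refine lt_of_le_of_ne ?_ ?_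
      · rw [show A * (P * ∏ Q ∈ s.erase P, Q) = (A * ∏ Q ∈ s.erase P, Q) * P by ring]
        exact Ideal.mul_le_left
      · intro heq
        have hAX : A * ∏ Q ∈ s.erase P, Q ≠ 0 := mul_ne_zero hA (hXne P hP)
        rw [show A * (P * ∏ Q ∈ s.erase P, Q) = (A * ∏ Q ∈ s.erase P, Q) * P by ring] at heq
        have : (A * ∏ Q ∈ s.erase P, Q) * P = (A * ∏ Q ∈ s.erase P, Q) * 1 := by
          rw [heq, mul_one]
        have hP1 : P = 1 := mul_left_cancel₀ hAX this
        exact (hprime P hP).2.1 (by simp [hP1])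
    obtain ⟨x, hx1, hx2⟩ := SetLike.exists_of_lt hlt
    exact ⟨x, hx1, hx2⟩
  choose f hf1 hf2 using hstrict
  set a : R := ∑ P ∈ s.attach, f P P.2 with ha
  have hmax : ∀ P ∈ s, P.IsMaximal :=
    fun P hP => Ideal.isPrime_of_prime (hprime P hP) |>.isMaximal (hprime P hP).ne_zero
  have hamem : a ∈ A := Submodule.sum_mem _ fun P _ => Ideal.mul_le_left (hf1 P P.2)
  have key : ∀ P ∈ s, a ∉ A * P := by
    intro P hP hcon
    have hothers : ∀ Q : {x // x ∈ s}, Q.1 ≠ P → f Q Q.2 ∈ A * P := by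
      intro Q hQ
      have hPel : P ∈ s.erase Q.1 := Finset.mem_erase.mpr ⟨fun h => hQ h.symm, hP⟩
      have hle : (∏ Q' ∈ s.erase Q.1, Q') ≤ P := by
        rw [← Finset.mul_prod_erase _ (fun Q' => Q') hPel]
        exact Ideal.mul_le_left
      exact Ideal.mul_mono_right hle (hf1 Q Q.2)
    have hfP : f P hP ∈ A * P := by
      have hsplit : a = f P hP + ∑ Q ∈ s.attach.filter (fun Q => Q.1 ≠ P), f Q Q.2 := by
        rw [ha, ← Finset.sum_filter_add_sum_filter_not s.attach (fun Q => Q.1 = P)]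
        congr 1
        have : s.attach.filter (fun Q => Q.1 = P) = {⟨P, hP⟩} := by
          ext Q
          simp [Finset.mem_filter, Subtype.ext_iff]
        rw [this, Finset.sum_singleton]
      have hsum : ∑ Q ∈ s.attach.filter (fun Q => Q.1 ≠ P), f Q Q.2 ∈ A * P :=
        Submodule.sum_mem _ fun Q hQ => hothers Q (by simpa using (Finset.mem_filter.mp hQ).2)
      have := Submodule.sub_mem _ hcon hsum
      rwa [hsplit, add_sub_cancel_right] at this
    have hcop : IsCoprime (∏ Q ∈ s.erase P, Q) P := by
      refine IsCoprime.prod_left fun Q hQ => ?_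
      rw [Ideal.isCoprime_iff_sup_eq]
      exact Ideal.IsMaximal.coprime_of_ne (hmax Q (Finset.mem_of_mem_erase hQ)) (hmax P hP)
        (Finset.ne_of_mem_erase hQ)
    have hd1 : A * P ∣ span {f P hP} :=
      Ideal.dvd_iff_le.mpr ((span_singleton_le_iff_mem _).mpr hfP)
    have hd2 : A * ∏ Q ∈ s.erase P, Q ∣ span {f P hP} :=
      Ideal.dvd_iff_le.mpr ((span_singleton_le_iff_mem _).mpr (hf1 P hP))
    obtain ⟨D, hD⟩ := hd1
    have hXD : (∏ Q ∈ s.erase P, Q) ∣ P * D := by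
      have : A * ∏ Q ∈ s.erase P, Q ∣ A * (P * D) := by rw [← mul_assoc, ← hD]; exact hd2
      exact (mul_dvd_mul_iff_left hA).mp this
    have hXdD : (∏ Q ∈ s.erase P, Q) ∣ D := hcop.dvd_of_dvd_mul_left hXD
    have hfin : A * ∏ Q ∈ s, Q ∣ span {f P hP} := by
      rw [← hmulerase P hP, hD]
      obtain ⟨E, hE⟩ := hXdD
      exact ⟨E, by rw [hE]; ring⟩
    exact hf2 P hP (Ideal.dvd_iff_le.mp hfin (Ideal.mem_span_singleton_self _))
  obtain ⟨P0, hP0⟩ := hne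
  have ha0 : a ≠ 0 := fun h => key P0 hP0 (h ▸ (A * P0).zero_mem)
  exact ⟨a, hamem, ha0, key⟩


/-- Moving lemma: there is `a ∈ A` and `C` coprime to `B` with `A * C = (a)`. -/
lemma exists_coprime_factor (A B : Ideal R) (hA : A ≠ ⊥) (hB : B ≠ ⊥) :
    ∃ (a : R) (C : Ideal R), a ≠ 0 ∧ C ⊔ B = ⊤ ∧ A * C = Ideal.span {a} := by
  obtain ⟨a, haA, ha0, havoid⟩ := exists_avoid A B hA hB
  set K := FractionRing R
  set A' : FractionalIdeal R⁰ K := ↑A with hA'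
  have hA'0 : A' ≠ 0 := coeIdeal_ne_zero.mpr hA
  have hle1 : spanSingleton R⁰ (algebraMap R K a) * A'⁻¹ ≤ 1 := by
    have h1 : spanSingleton R⁰ (algebraMap R K a) ≤ A' := by
      rw [spanSingleton_le_iff_mem]
      exact mem_coeIdeal_of_mem R⁰ haA
    calc spanSingleton R⁰ (algebraMap R K a) * A'⁻¹ ≤ A' * A'⁻¹ :=
          mul_left_mono (a := A'⁻¹) h1
      _ = 1 := mul_inv_cancel₀ hA'0
  obtain ⟨C, hC⟩ := le_one_iff_exists_coeIdeal.mp hle1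
  have hAC : A * C = Ideal.span {a} := by
    apply FractionalIdeal.coeIdeal_injective (K := K)
    push_cast
    rw [hC, show (A : FractionalIdeal R⁰ K) * (spanSingleton R⁰ (algebraMap R K a) * A'⁻¹)
        = spanSingleton R⁰ (algebraMap R K a) * (A' * A'⁻¹) by rw [hA']; ring,
      mul_inv_cancel₀ hA'0, mul_one, coeIdeal_span_singleton]
  refine ⟨a, C, ha0, ?_, hAC⟩
  by_contra hsup
  obtain ⟨P, hPmax, hPle⟩ := Ideal.exists_le_maximal _ hsup
  have hBP : B ≤ P := le_trans le_sup_right hPle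
  have hCP : C ≤ P := le_trans le_sup_left hPle
  refine havoid P hPmax hBP ?_
  have : Ideal.span {a} ≤ A * P := hAC ▸ Ideal.mul_mono_right hCP
  exact this (Ideal.mem_span_singleton_self a)

/-- The coprime case of Steinitz. -/
lemma coprimeCase (C B : Ideal R) (h : C ⊔ B = ⊤) :
    Nonempty ((↥C × ↥B) ≃ₗ[R] (R × ↥(C * B))) := by
  have h1 : (1 : R) ∈ C ⊔ B := h ▸ Submodule.mem_top
  obtain ⟨y, hy, z, hz, hyz⟩ := Submodule.mem_sup.mp h1
  -- c := 1 + b with b := -z ; c = y ∈ C, b ∈ B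
  set b : R := -z with hbdef
  have hb : b ∈ B := B.neg_mem hz
  have hc : (1 : R) + b ∈ C := by
    have : (1 : R) + b = y := by rw [hbdef]; linear_combination -hyz
    rw [this]; exact hy
  have hinf : C * B = C ⊓ B := Ideal.mul_eq_inf_of_coprime h
  have memCB : ∀ (x e : R), x ∈ C → e ∈ B → x - (x - e) * (1 + b) ∈ C * B := by
    intro x e hx he
    rw [hinf]
    constructor
    · exact C.sub_mem hx (C.mul_mem_left _ hc)
    · have : x - (x - e) * (1 + b) = e - (x - e) * b := by ring
      rw [this]
      exact B.sub_mem he (B.mul_mem_left _ hb)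
  refine ⟨LinearEquiv.ofLinear
    { toFun := fun p => ((p.1 : R) - (p.2 : R),
        ⟨(p.1 : R) - ((p.1 : R) - (p.2 : R)) * (1 + b), memCB _ _ p.1.2 p.2.2⟩)
      map_add' := fun p q => by ext <;> simp <;> ring
      map_smul' := fun r p => by ext <;> simp <;> ring }
    { toFun := fun w => (⟨w.1 * (1 + b) + (w.2 : R),
          C.add_mem (C.mul_mem_left _ hc) (Ideal.mul_le_left (w.2.2 : (w.2 : R) ∈ C * B))⟩,
        ⟨w.1 * b + (w.2 : R),
          B.add_mem (B.mul_mem_left _ hb) (Ideal.mul_le_right w.2.2)⟩)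
      map_add' := fun p q => by ext <;> simp <;> ring
      map_smul' := fun r p => by ext <;> simp <;> ring }
    (by ext ⟨r, k⟩ <;> simp <;> ring)
    (by ext ⟨x, e⟩ <;> simp <;> ring)⟩

end Aux

/-- Steinitz isomorphism theorem: for nonzero ideals `A`, `B` of a Dedekind domain `R`,
`A ⊕ B ≅ R ⊕ AB` as `R`-modules. -/
theorem steinitz_isomorphism (R : Type*) [CommRing R] [IsDomain R] [IsDedekindDomain R]
    (A B : Ideal R) (hA : A ≠ ⊥) (hB : B ≠ ⊥) :
    Nonempty ((↥A × ↥B) ≃ₗ[R] (R × ↥(A * B))) := by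
  obtain ⟨a, C₁, ha0, hC₁B, hAC₁⟩ := exists_coprime_factor A B hA hB
  have hC₁ : C₁ ≠ ⊥ := by
    intro h
    rw [h, mul_bot] at hAC₁
    exact ha0 (Ideal.span_singleton_eq_bot.mp hAC₁.symm)
  obtain ⟨b, C₂, hb0, hC₂B, hC₁C₂⟩ := exists_coprime_factor C₁ B hC₁ hB
  have key : Ideal.span {a} * C₂ = Ideal.span {b} * A := by
    rw [← hAC₁, mul_assoc, hC₁C₂]; ring
  have key2 : Ideal.span {a} * (C₂ * B) = Ideal.span {b} * (A * B) := by
    rw [← mul_assoc, key]; ring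
  have eA : ↥A ≃ₗ[R] ↥C₂ :=
    ((scaleEquiv b hb0 A).trans (LinearEquiv.ofEq _ _ key.symm)).trans
      (scaleEquiv a ha0 C₂).symm
  have eAB : ↥(A * B) ≃ₗ[R] ↥(C₂ * B) :=
    ((scaleEquiv b hb0 (A * B)).trans (LinearEquiv.ofEq _ _ key2.symm)).trans
      (scaleEquiv a ha0 (C₂ * B)).symm
  obtain ⟨ecop⟩ := coprimeCase C₂ B hC₂B
  have e1 : (↥A × ↥B) ≃ₗ[R] (↥C₂ × ↥B) := LinearEquiv.prodCongr eA (LinearEquiv.refl R ↥B)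
  have e3 : (R × ↥(C₂ * B)) ≃ₗ[R] (R × ↥(A * B)) :=
    LinearEquiv.prodCongr (LinearEquiv.refl R R) eAB.symm
  exact ⟨(e1.trans ecop).trans e3⟩
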